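/- arXiv:1907.07999 — 2 statements merged into one kernel-verified Lean document; each statement's English description precedes it below -/
import Mathlib

section
/- Let G be a finite group and n a positive integer. Suppose G is generated by its elements of order n, and the commutator subgroup [G,G] contains an element of order n. Then there exist an odd number L and elements g_1, ..., g_L of G, each of order n, such that g_1 g_2 ... g_L equals the identity. -/
theorem stmt_2 (G : Type*) [Group G] [Finite G] (n : ℕ) (hn : 0 < n)
    (hgen : Subgroup.closure {g : G | orderOf g = n} = ⊤)
    (hcomm : ∃ g ∈ commutator G, orderOf g = n) :
    ∃ l : List G, Odd l.length ∧ (∀ g ∈ l, orderOf g = n) ∧ l.prod = 1 := by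
  -- inverting a word
  have invw : ∀ l : List G, (∀ x ∈ l, orderOf x = n) →
      (∀ x ∈ (l.map Inv.inv).reverse, orderOf x = n) ∧
      ((l.map Inv.inv).reverse).prod = l.prod⁻¹ ∧
      ((l.map Inv.inv).reverse).length = l.length := by
    intro l h
    refine ⟨?_, ?_, by simp⟩
    · intro x hx
      simp only [List.mem_reverse, List.mem_map] at hx
      obtain ⟨y, hy, rfl⟩ := hx
      rw [orderOf_inv]; exact h y hy
    · rw [← List.prod_inv_reverse]
  -- Every element is a word in elements of order n
  have word : ∀ g : G, ∃ l : List G, (∀ x ∈ l, orderOf x = n) ∧ l.prod = g := by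
    intro g
    have hg : g ∈ Subgroup.closure {g : G | orderOf g = n} := by
      rw [hgen]; exact Subgroup.mem_top g
    induction hg using Subgroup.closure_induction with
    | mem x hx => exact ⟨[x], by simpa using hx, by simp⟩
    | one => exact ⟨[], by simp, by simp⟩
    | mul a b _ _ ha hb =>
      obtain ⟨l₁, h₁, p₁⟩ := ha
      obtain ⟨l₂, h₂, p₂⟩ := hb
      refine ⟨l₁ ++ l₂, ?_, by simp [p₁, p₂]⟩
      intro x hx
      rcases List.mem_append.1 hx with h | h
      exacts [h₁ x h, h₂ x h]
    | inv a _ ha =>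
      obtain ⟨l, h, p⟩ := ha
      obtain ⟨h', p', _⟩ := invw l h
      exact ⟨(l.map Inv.inv).reverse, h', by rw [p', p]⟩
  -- Every element of the commutator subgroup is an even-length word
  have evenword : ∀ g ∈ commutator G,
      ∃ l : List G, Even l.length ∧ (∀ x ∈ l, orderOf x = n) ∧ l.prod = g := by
    intro g hg
    rw [commutator_eq_closure] at hg
    induction hg using Subgroup.closure_induction with
    | mem x hx =>
      obtain ⟨a, b, rfl⟩ := hx
      obtain ⟨la, ha, pa⟩ := word a
      obtain ⟨lb, hb, pb⟩ := word b
      obtain ⟨ha', pa', la'len⟩ := invw la ha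
      obtain ⟨hb', pb', lb'len⟩ := invw lb hb
      refine ⟨la ++ lb ++ (la.map Inv.inv).reverse ++ (lb.map Inv.inv).reverse, ?_, ?_, ?_⟩
      · simp only [List.length_append, la'len, lb'len]
        exact ⟨la.length + lb.length, by ring⟩
      · intro x hx
        simp only [List.mem_append] at hx
        rcases hx with ((h | h) | h) | h
        exacts [ha x h, hb x h, ha' x h, hb' x h]
      · simp only [List.prod_append, pa', pb', pa, pb]
        exact (commutatorElement_def a b).symm
    | one => exact ⟨[], by simp, by simp, by simp⟩
    | mul a b _ _ ha hb =>
      obtain ⟨l₁, e₁, h₁, p₁⟩ := ha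
      obtain ⟨l₂, e₂, h₂, p₂⟩ := hb
      refine ⟨l₁ ++ l₂, by simpa using Even.add e₁ e₂, ?_, by simp [p₁, p₂]⟩
      intro x hx
      rcases List.mem_append.1 hx with h | h
      exacts [h₁ x h, h₂ x h]
    | inv a _ ha =>
      obtain ⟨l, e, h, p⟩ := ha
      obtain ⟨h', p', len⟩ := invw l h
      exact ⟨(l.map Inv.inv).reverse, len ▸ e, h', by rw [p', p]⟩
  obtain ⟨g, hg, hog⟩ := hcomm
  obtain ⟨l, e, h, p⟩ := evenword g hg
  refine ⟨l ++ [g⁻¹], by simpa [Nat.even_add_one, Nat.odd_add_one] using e, ?_, by simp [p]⟩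
  intro x hx
  rcases List.mem_append.1 hx with hh | hh
  · exact h x hh
  · simp only [List.mem_singleton] at hh; subst hh; rw [orderOf_inv]; exact hog
end

section
/- Let G be a finite group that is not a p-group (i.e., at least two distinct primes divide |G|). Suppose that for every prime p dividing |G|, G is generated by its elements of order p. Then G is perfect, i.e., [G,G] = G. -/
theorem stmt_3 (G : Type*) [Group G] [Finite G]
    (hnp : ∃ p q : ℕ, p.Prime ∧ q.Prime ∧ p ≠ q ∧ p ∣ Nat.card G ∧ q ∣ Nat.card G)
    (hgen : ∀ p : ℕ, p.Prime → p ∣ Nat.card G →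
      Subgroup.closure {g : G | orderOf g = p} = ⊤) :
    commutator G = ⊤ := by
  obtain ⟨p, q, hp, hq, hpq, hpd, hqd⟩ := hnp
  have key : ∀ r : ℕ, r.Prime → r ∣ Nat.card G → ∀ a : Abelianization G, a ^ r = 1 := by
    intro r hr hrd a
    obtain ⟨g, rfl⟩ := QuotientGroup.mk_surjective a
    · show (Abelianization.of g) ^ r = 1
      have hg : g ∈ ((powMonoidHom r : Abelianization G →* Abelianization G).comp
          Abelianization.of).ker := by
        have : g ∈ Subgroup.closure {g : G | orderOf g = r} := by
          rw [hgen r hr hrd]; trivial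
        refine Subgroup.closure_le _ |>.mpr ?_ this
        intro x hx
        simp only [Set.mem_setOf_eq] at hx
        have hx1 : x ^ r = 1 := hx ▸ pow_orderOf_eq_one x
        simp only [SetLike.mem_coe, MonoidHom.mem_ker, MonoidHom.comp_apply,
          powMonoidHom_apply, ← map_pow, hx1, map_one]
      simpa [MonoidHom.mem_ker, powMonoidHom_apply] using hg
  have htriv : ∀ a : Abelianization G, a = 1 := by
    intro a
    have h1 : orderOf a ∣ p := orderOf_dvd_of_pow_eq_one (key p hp hpd a)
    have h2 : orderOf a ∣ q := orderOf_dvd_of_pow_eq_one (key q hq hqd a)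
    have : orderOf a ∣ Nat.gcd p q := Nat.dvd_gcd h1 h2
    rw [Nat.Coprime.gcd_eq_one ((Nat.coprime_primes hp hq).mpr hpq)] at this
    exact orderOf_eq_one_iff.mp (Nat.dvd_one.mp this)
  rw [Subgroup.eq_top_iff']
  intro x
  rw [← QuotientGroup.eq_one_iff]
  exact htriv _
end
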